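/- Let U ∈ R^{n×m} have distinct unit columns positively spanning R^n, let U = S_1 ∪ ... ∪ S_d be its unique partition into irreducible sets, and let γ ∈ C_cv(U) ∩ R^m_{>0}. Then the solution set S(U,γ) = {b ∈ R^m_{≥0} : γ(U,b) = γ} has (semialgebraic) dimension at least d − 1; in particular, if d ≥ 2 then S(U,γ) is infinite. Concretely, if b = (b_{S_d}, b_V) ∈ S(U,γ) with V = U ∖ S_d, then for every λ > 0 the vector b_λ = (λ b_{S_d}, λ^{−k/(n−k)} b_V), where k = rank(S_d), also lies in S(U,γ). -/

import Mathlib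

open MeasureTheory Module
open scoped RealInnerProductSpace

noncomputable section

def polyhedron {n m : ℕ} (U : Fin m → EuclideanSpace ℝ (Fin n)) (b : Fin m → ℝ) :
    Set (EuclideanSpace ℝ (Fin n)) :=
  {x | ∀ i, ⟪U i, x⟫ ≤ b i}

def coneVol {n m : ℕ} (U : Fin m → EuclideanSpace ℝ (Fin n)) (b : Fin m → ℝ) :
    Fin m → ℝ := fun i =>
  b i / n * (μH[(n : ℝ) - 1] (polyhedron U b ∩ {x | ⟪U i, x⟫ = b i})).toReal

def PosSpanning {n m : ℕ} (U : Fin m → EuclideanSpace ℝ (Fin n)) : Prop :=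
  ∀ x : EuclideanSpace ℝ (Fin n),
    ∃ c : Fin m → ℝ, (∀ i, 0 ≤ c i) ∧ x = ∑ i, c i • U i

/-- The solution set `S(U,γ)` of right-hand sides yielding cone-volume vector `γ`. -/
def solSet {n m : ℕ} (U : Fin m → EuclideanSpace ℝ (Fin n)) (γ : Fin m → ℝ) :
    Set (Fin m → ℝ) :=
  {c | (∀ i, 0 ≤ c i) ∧ coneVol U c = γ}

/-! ### Auxiliary lemmas -/

lemma det_smul_compl {V : Type*} [AddCommGroup V] [Module ℝ V] [FiniteDimensional ℝ V]
    {p q : Submodule ℝ V} (h : IsCompl p q) (a c : ℝ) (f : V →ₗ[ℝ] V)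
    (hfp : ∀ x ∈ p, f x = a • x) (hfq : ∀ x ∈ q, f x = c • x) :
    LinearMap.det f = a ^ finrank ℝ p * c ^ finrank ℝ q := by
  classical
  set e := Submodule.prodEquivOfIsCompl p q h
  set bp := finBasis ℝ p
  set bq := finBasis ℝ q
  set B : Basis (Fin (finrank ℝ p) ⊕ Fin (finrank ℝ q)) ℝ V := (bp.prod bq).map e
  have hB : ∀ s, f (B s) = (Sum.elim (fun _ => a) (fun _ => c) s) • B s := by
    rintro (i | j)
    · have : B (Sum.inl i) = (bp i : V) := by
        simp [B, e, Basis.prod_apply, Submodule.coe_prodEquivOfIsCompl']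
      rw [this]
      exact hfp _ (bp i).2
    · have : B (Sum.inr j) = (bq j : V) := by
        simp [B, e, Basis.prod_apply, Submodule.coe_prodEquivOfIsCompl']
      rw [this]
      exact hfq _ (bq j).2
  have hmat : LinearMap.toMatrix B B f = Matrix.diagonal (Sum.elim (fun _ => a) (fun _ => c)) := by
    ext s t
    rw [LinearMap.toMatrix_apply, hB, _root_.map_smul]
    simp [Basis.repr_self, Finsupp.single_apply, Matrix.diagonal, eq_comm]
    split <;> simp_all
  rw [← LinearMap.det_toMatrix B, hmat, Matrix.det_diagonal, Fintype.prod_sum_type]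
  simp

lemma isAddHaar_hausdorff (d : ℕ) :
    (μH[(d:ℝ)] : Measure (EuclideanSpace ℝ (Fin d))).IsAddHaarMeasure := by
  have hcard : (Fintype.card (Fin d) : ℝ) = (d : ℝ) := by simp
  have hpi : (μH[(d:ℝ)] : Measure (Fin d → ℝ)) = volume := by
    rw [← hcard]; exact hausdorffMeasure_pi_real
  have hL1 : LipschitzWith 1 ⇑(WithLp.equiv 2 (Fin d → ℝ)) := PiLp.lipschitzWith_ofLp 2 _
  have hL2 : LipschitzWith ((Fintype.card (Fin d) : NNReal) ^ (1/(2:ENNReal)).toReal)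
      ⇑(WithLp.equiv 2 (Fin d → ℝ)).symm := by
    have h := PiLp.antilipschitzWith_ofLp 2 (fun _ : Fin d => ℝ)
    intro x y
    simpa using h ((WithLp.equiv 2 (Fin d → ℝ)).symm x) ((WithLp.equiv 2 (Fin d → ℝ)).symm y)
  have hd0 : (0:ℝ) ≤ (d:ℝ) := by positivity
  haveI : IsFiniteMeasureOnCompacts (μH[(d:ℝ)] : Measure (EuclideanSpace ℝ (Fin d))) := by
    constructor
    intro K hK
    have himg : K = ⇑(WithLp.equiv 2 (Fin d → ℝ)).symm '' (⇑(WithLp.equiv 2 (Fin d → ℝ)) '' K) := by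
      simp [Set.image_image]
    have h1 := hL2.hausdorffMeasure_image_le hd0 (⇑(WithLp.equiv 2 (Fin d → ℝ)) '' K)
    rw [← himg] at h1
    refine h1.trans_lt ?_
    rw [hpi]
    exact ENNReal.mul_lt_top (ENNReal.rpow_lt_top_of_nonneg hd0 (by simp))
      (hK.image hL1.continuous).measure_lt_top
  haveI : (μH[(d:ℝ)] : Measure (EuclideanSpace ℝ (Fin d))).IsOpenPosMeasure := by
    constructor
    intro U hU hne
    have hUim : ⇑(WithLp.equiv 2 (Fin d → ℝ)) '' U = ⇑(WithLp.equiv 2 (Fin d → ℝ)).symm ⁻¹' U := by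
      rw [Equiv.image_eq_preimage_symm]
    have hopen : IsOpen (⇑(WithLp.equiv 2 (Fin d → ℝ)) '' U) := by
      rw [hUim]; exact hU.preimage hL2.continuous
    have hpos : 0 < volume (⇑(WithLp.equiv 2 (Fin d → ℝ)) '' U) :=
      hopen.measure_pos _ (hne.image _)
    intro h0
    rw [← hpi] at hpos
    have := hL1.hausdorffMeasure_image_le hd0 U
    rw [h0] at this
    simp only [mul_zero, le_zero_iff] at this
    rw [this] at hpos; exact lt_irrefl _ hpos
  constructor

lemma hplane_image {n : ℕ} (hn : 1 ≤ n)
    (T : EuclideanSpace ℝ (Fin n) →ₗ[ℝ] EuclideanSpace ℝ (Fin n))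
    {ν : EuclideanSpace ℝ (Fin n)} (hν : ‖ν‖ = 1)
    (hTK : ∀ x ∈ (Submodule.span ℝ {ν})ᗮ, T x ∈ (Submodule.span ℝ {ν})ᗮ)
    (c : ℝ) (s : Set (EuclideanSpace ℝ (Fin n))) (hs : ∀ x ∈ s, ⟪ν, x⟫ = c) :
    μH[(n:ℝ)-1] (T '' s)
      = ENNReal.ofReal |LinearMap.det (T.restrict hTK)| * μH[(n:ℝ)-1] s := by
  set K : Submodule ℝ (EuclideanSpace ℝ (Fin n)) := (Submodule.span ℝ {ν})ᗮ with hKdef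
  have hν0 : ν ≠ 0 := by intro h; rw [h] at hν; simp at hν
  set d := finrank ℝ K with hddef
  have hdn : d = n - 1 := by
    have h1 := Submodule.finrank_add_finrank_orthogonal (Submodule.span ℝ {ν})
    rw [finrank_span_singleton hν0, finrank_euclideanSpace_fin, ← hKdef] at h1
    omega
  have hdcast : ((d:ℝ)) = (n:ℝ) - 1 := by
    rw [hdn, Nat.cast_sub hn]; simp
  have hd0 : (0:ℝ) ≤ (d:ℝ) := by positivity
  rw [← hdcast]
  set s₀ : Set (EuclideanSpace ℝ (Fin n)) := (fun x => x + -(c • ν)) '' s with hs₀def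
  have hmeq : μH[(d:ℝ)] s₀ = μH[(d:ℝ)] s :=
    (IsometryEquiv.addRight (-(c • ν))).hausdorffMeasure_image _ _
  have hTs : T '' s = (fun y => y + T (c • ν)) '' (T '' s₀) := by
    rw [hs₀def, Set.image_image, Set.image_image]
    apply Set.image_congr
    intro x _
    rw [← map_add]
    congr 1
    abel
  have hmeqT : μH[(d:ℝ)] (T '' s) = μH[(d:ℝ)] (T '' s₀) := by
    rw [hTs]
    exact (IsometryEquiv.addRight (T (c • ν))).hausdorffMeasure_image _ _
  rw [hmeqT, ← hmeq]
  have hsub : s₀ ⊆ (K : Set (EuclideanSpace ℝ (Fin n))) := by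
    rintro - ⟨x, hx, rfl⟩
    rw [hKdef, SetLike.mem_coe, Submodule.mem_orthogonal_singleton_iff_inner_left]
    rw [real_inner_comm, inner_add_right, inner_neg_right, real_inner_smul_right, hs x hx,
      real_inner_self_eq_norm_sq, hν, one_pow, mul_one, add_neg_cancel]
  set s₁ : Set K := ((↑) : K → EuclideanSpace ℝ (Fin n)) ⁻¹' s₀ with hs₁def
  have hs₁ : ((↑) : K → EuclideanSpace ℝ (Fin n)) '' s₁ = s₀ := by
    rw [hs₁def, Set.image_preimage_eq_iff.2]
    rw [Subtype.range_coe]; exact hsub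
  set B : K →ₗ[ℝ] K := T.restrict hTK with hBdef
  have hTcomm : ∀ y : K, T (y : EuclideanSpace ℝ (Fin n)) = ((B y : K) : EuclideanSpace ℝ (Fin n)) := fun y =>
    (LinearMap.restrict_coe_apply T hTK y).symm
  have hTs₀ : T '' s₀ = ((↑) : K → EuclideanSpace ℝ (Fin n)) '' (B '' s₁) := by
    rw [← hs₁, Set.image_image, Set.image_image]
    exact Set.image_congr fun x _ => hTcomm x
  have hcoe : Isometry ((↑) : K → EuclideanSpace ℝ (Fin n)) := isometry_subtype_coe
  rw [hTs₀, hcoe.hausdorffMeasure_image (Or.inl hd0), ← hs₁,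
    hcoe.hausdorffMeasure_image (Or.inl hd0)]
  set e : K ≃ₗᵢ[ℝ] EuclideanSpace ℝ (Fin d) := (stdOrthonormalBasis ℝ K).repr with hedef
  have he : Isometry e := e.isometry
  rw [← he.hausdorffMeasure_image (Or.inl hd0) (B '' s₁),
    ← he.hausdorffMeasure_image (Or.inl hd0) s₁]
  set B' : EuclideanSpace ℝ (Fin d) →ₗ[ℝ] EuclideanSpace ℝ (Fin d) :=
    ↑e.toLinearEquiv ∘ₗ B ∘ₗ ↑e.toLinearEquiv.symm with hB'def
  have himg : ⇑e '' (B '' s₁) = B' '' (⇑e '' s₁) := by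
    rw [Set.image_image, Set.image_image]
    apply Set.image_congr
    intro x _
    simp [hB'def]
  rw [himg]
  haveI := isAddHaar_hausdorff d
  rw [Measure.addHaar_image_linearMap]
  congr 2
  rw [hB'def]
  rw [LinearMap.det_conj B e.toLinearEquiv]

lemma isCompl_of_finrank {V : Type*} [AddCommGroup V] [Module ℝ V] [FiniteDimensional ℝ V]
    {p q : Submodule ℝ V} (hinf : p ⊓ q = ⊥) (hr : finrank ℝ V ≤ finrank ℝ p + finrank ℝ q) :
    IsCompl p q := by
  have h := Submodule.finrank_sup_add_finrank_inf_eq p q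
  rw [hinf, finrank_bot, add_zero] at h
  have hle := Submodule.finrank_le (p ⊔ q)
  have hsup : p ⊔ q = ⊤ := Submodule.eq_top_of_finrank_eq (by omega)
  exact ⟨disjoint_iff.2 hinf, codisjoint_iff.2 hsup⟩

lemma isCompl_orth {n : ℕ} {W₁ W₂ : Submodule ℝ (EuclideanSpace ℝ (Fin n))}
    (hc : IsCompl W₁ W₂) : IsCompl W₂ᗮ W₁ᗮ := by
  have hinf : W₂ᗮ ⊓ W₁ᗮ = ⊥ := by
    rw [Submodule.inf_orthogonal, sup_comm, hc.sup_eq_top, Submodule.top_orthogonal_eq_bot]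
  apply isCompl_of_finrank hinf
  have d1 := Submodule.finrank_add_finrank_orthogonal W₁
  have d2 := Submodule.finrank_add_finrank_orthogonal W₂
  have d3 := Submodule.finrank_sup_add_finrank_inf_eq W₁ W₂
  rw [hc.sup_eq_top, hc.inf_eq_bot, finrank_bot, finrank_top, add_zero] at d3
  rw [finrank_euclideanSpace_fin] at d1 d2 d3
  rw [finrank_euclideanSpace_fin]
  omega

lemma scaling_exists {n : ℕ} (W₁ W₂ : Submodule ℝ (EuclideanSpace ℝ (Fin n)))
    (hc : IsCompl W₁ W₂) (a₁ a₂ : ℝ) (h₁ : a₁ ≠ 0) (h₂ : a₂ ≠ 0) :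
    ∃ T : EuclideanSpace ℝ (Fin n) →ₗ[ℝ] EuclideanSpace ℝ (Fin n),
      (∀ x ∈ W₂ᗮ, T x = a₁ • x) ∧ (∀ x ∈ W₁ᗮ, T x = a₂ • x) ∧ Function.Surjective T := by
  have hOC : IsCompl W₂ᗮ W₁ᗮ := isCompl_orth hc
  set P := W₂ᗮ
  set Q := W₁ᗮ
  set T : EuclideanSpace ℝ (Fin n) →ₗ[ℝ] EuclideanSpace ℝ (Fin n) :=
    a₁ • (P.subtype ∘ₗ P.linearProjOfIsCompl Q hOC)
      + a₂ • (Q.subtype ∘ₗ Q.linearProjOfIsCompl P hOC.symm) with hTdef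
  have hP : ∀ x ∈ P, T x = a₁ • x := by
    intro x hx
    have e1 : P.linearProjOfIsCompl Q hOC x = ⟨x, hx⟩ :=
      Submodule.linearProjOfIsCompl_apply_left hOC ⟨x, hx⟩
    have e2 : Q.linearProjOfIsCompl P hOC.symm x = 0 :=
      Submodule.linearProjOfIsCompl_apply_right' hOC.symm hx
    simp [hTdef, e1, e2]
  have hQ : ∀ x ∈ Q, T x = a₂ • x := by
    intro x hx
    have e1 : Q.linearProjOfIsCompl P hOC.symm x = ⟨x, hx⟩ :=
      Submodule.linearProjOfIsCompl_apply_left hOC.symm ⟨x, hx⟩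
    have e2 : P.linearProjOfIsCompl Q hOC x = 0 :=
      Submodule.linearProjOfIsCompl_apply_right' hOC hx
    simp [hTdef, e1, e2]
  refine ⟨T, hP, hQ, ?_⟩
  intro y
  obtain ⟨u, v, huv, -⟩ := Submodule.existsUnique_add_of_isCompl hOC y
  refine ⟨a₁⁻¹ • (u : EuclideanSpace ℝ (Fin n)) + a₂⁻¹ • (v : EuclideanSpace ℝ (Fin n)), ?_⟩
  rw [map_add, LinearMap.map_smul, LinearMap.map_smul, hP u u.2, hQ v v.2, smul_smul, smul_smul,
    inv_mul_cancel₀ h₁, inv_mul_cancel₀ h₂, one_smul, one_smul, huv]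

lemma det_restrict_hyperplane {n : ℕ} {W₁ W₂ : Submodule ℝ (EuclideanSpace ℝ (Fin n))}
    (hc : IsCompl W₁ W₂) {a₁ a₂ : ℝ}
    (T : EuclideanSpace ℝ (Fin n) →ₗ[ℝ] EuclideanSpace ℝ (Fin n))
    (hT₁ : ∀ x ∈ W₂ᗮ, T x = a₁ • x) (hT₂ : ∀ x ∈ W₁ᗮ, T x = a₂ • x)
    {ν : EuclideanSpace ℝ (Fin n)} (hν : ν ≠ 0) (hνW : ν ∈ W₁)
    (hTK : ∀ x ∈ (Submodule.span ℝ {ν})ᗮ, T x ∈ (Submodule.span ℝ {ν})ᗮ) :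
    LinearMap.det (T.restrict hTK)
      = a₁ ^ (finrank ℝ W₁ - 1) * a₂ ^ finrank ℝ W₂ := by
  set K : Submodule ℝ (EuclideanSpace ℝ (Fin n)) := (Submodule.span ℝ {ν})ᗮ with hKdef
  have hspan : Submodule.span ℝ {ν} ≤ W₁ :=
    Submodule.span_le.2 (Set.singleton_subset_iff.2 hνW)
  have hW1K : W₁ᗮ ≤ K := Submodule.orthogonal_le hspan
  have hfinK : finrank ℝ K = n - 1 := by
    have h1 := Submodule.finrank_add_finrank_orthogonal (Submodule.span ℝ {ν})
    rw [finrank_span_singleton hν, finrank_euclideanSpace_fin, ← hKdef] at h1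
    omega
  have hsum : finrank ℝ W₁ + finrank ℝ W₂ = n := by
    have d3 := Submodule.finrank_sup_add_finrank_inf_eq W₁ W₂
    rw [hc.sup_eq_top, hc.inf_eq_bot, finrank_bot, finrank_top, add_zero,
      finrank_euclideanSpace_fin] at d3
    omega
  have hk₁pos : 1 ≤ finrank ℝ W₁ := by
    calc 1 = finrank ℝ (Submodule.span ℝ {ν}) := (finrank_span_singleton hν).symm
    _ ≤ finrank ℝ W₁ := Submodule.finrank_mono hspan
  set p₁ : Submodule ℝ K := Submodule.comap K.subtype W₂ᗮ with hp₁def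
  set p₂ : Submodule ℝ K := Submodule.comap K.subtype W₁ᗮ with hp₂def
  have horthsum : finrank ℝ (W₁ᗮ : Submodule ℝ (EuclideanSpace ℝ (Fin n))) = finrank ℝ W₂ := by
    have d1 := Submodule.finrank_add_finrank_orthogonal W₁
    rw [finrank_euclideanSpace_fin] at d1
    omega
  have hfin2 : finrank ℝ p₂ = finrank ℝ W₂ := by
    rw [hp₂def, ← horthsum]
    exact LinearEquiv.finrank_eq (Submodule.comapSubtypeEquivOfLe hW1K)
  have hfin1 : finrank ℝ p₁ = finrank ℝ W₁ - 1 := by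
    have he : Submodule.comap K.subtype W₂ᗮ = Submodule.comap K.subtype (W₂ᗮ ⊓ K) := by
      ext x
      simp only [Submodule.mem_comap, Submodule.mem_inf]
      exact ⟨fun h => ⟨h, x.2⟩, fun h => h.1⟩
    have h1 : finrank ℝ p₁ = finrank ℝ (W₂ᗮ ⊓ K : Submodule ℝ (EuclideanSpace ℝ (Fin n))) := by
      rw [hp₁def, he]
      exact LinearEquiv.finrank_eq (Submodule.comapSubtypeEquivOfLe inf_le_right)
    have h2 : W₂ᗮ ⊓ K = (W₂ ⊔ Submodule.span ℝ {ν})ᗮ := Submodule.inf_orthogonal _ _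
    have hdisj : W₂ ⊓ Submodule.span ℝ {ν} = ⊥ := by
      rw [← disjoint_iff]
      rw [Submodule.disjoint_span_singleton]
      intro h
      exact absurd (Submodule.disjoint_def.1 hc.disjoint ν hνW h) hν
    have h3 : finrank ℝ (W₂ ⊔ Submodule.span ℝ {ν} : Submodule ℝ (EuclideanSpace ℝ (Fin n)))
        = finrank ℝ W₂ + 1 := by
      have := Submodule.finrank_sup_add_finrank_inf_eq W₂ (Submodule.span ℝ {ν})
      rw [hdisj, finrank_bot, add_zero, finrank_span_singleton hν] at this
      omega
    have h4 := Submodule.finrank_add_finrank_orthogonal (W₂ ⊔ Submodule.span ℝ {ν})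
    rw [finrank_euclideanSpace_fin, h3] at h4
    rw [h1, h2]
    omega
  have hdisj12 : p₁ ⊓ p₂ = ⊥ := by
    rw [eq_bot_iff]
    rintro x ⟨hx1, hx2⟩
    have : (x : EuclideanSpace ℝ (Fin n)) ∈ W₂ᗮ ⊓ W₁ᗮ := ⟨hx1, hx2⟩
    rw [Submodule.inf_orthogonal, sup_comm, hc.sup_eq_top,
      Submodule.top_orthogonal_eq_bot] at this
    simp only [Submodule.mem_bot] at this ⊢
    exact Subtype.ext this
  have hcpl : IsCompl p₁ p₂ := by
    apply isCompl_of_finrank hdisj12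
    rw [hfin1, hfin2, hfinK]
    omega
  have hB₁ : ∀ x ∈ p₁, (T.restrict hTK) x = a₁ • x := by
    intro x hx
    apply Subtype.ext
    rw [LinearMap.restrict_coe_apply]
    exact hT₁ _ hx
  have hB₂ : ∀ x ∈ p₂, (T.restrict hTK) x = a₂ • x := by
    intro x hx
    apply Subtype.ext
    rw [LinearMap.restrict_coe_apply]
    exact hT₂ _ hx
  rw [det_smul_compl hcpl a₁ a₂ _ hB₁ hB₂, hfin1, hfin2]

/-- if `S` is a separator flat of rank `k` (giving a nontrivial direct-sum
decomposition of `U`), `γ ∈ C_cv(U) ∩ ℝ^m_{>0}` and `b ∈ S(U,γ)`, then for every `λ > 0` the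
rescaled vector `b_λ` (scaling the `S`-coordinates of `b` by `λ` and the remaining ones by
`λ^{-k/(n-k)}`) also lies in `S(U,γ)`; in particular `S(U,γ)` is infinite. -/
theorem stmt_16 (n m : ℕ) (hn : 0 < n) (U : Fin m → EuclideanSpace ℝ (Fin n))
    (hunit : ∀ i, ‖U i‖ = 1) (hinj : Function.Injective U) (hpos : PosSpanning U)
    (S : Finset (Fin m)) (k : ℕ)
    (hk : k = finrank ℝ (Submodule.span ℝ (U '' ↑S)))
    (hk1 : 1 ≤ k) (hk2 : k ≤ n - 1)
    (hflat : ∀ i, U i ∈ Submodule.span ℝ (U '' ↑S) → i ∈ S)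
    (hsep : Submodule.span ℝ (U '' ↑S) ⊓ Submodule.span ℝ (U '' ↑Sᶜ) = ⊥)
    (γ : Fin m → ℝ) (hγpos : ∀ i, 0 < γ i)
    (b : Fin m → ℝ) (hb : ∀ i, 0 ≤ b i)
    (hvol : volume (polyhedron U b) = 1) (hγ : coneVol U b = γ) :
    (∀ lam : ℝ, 0 < lam →
        (fun i => if i ∈ S then lam * b i else lam ^ (-(k : ℝ) / ((n : ℝ) - k)) * b i) ∈
          solSet U γ) ∧
      (solSet U γ).Infinite := by
  have hkn : k < n := lt_of_le_of_lt hk2 (Nat.sub_lt hn Nat.one_pos)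
  have hnk0 : ((n:ℝ)) - (k:ℝ) ≠ 0 := by
    have : (k:ℝ) < (n:ℝ) := Nat.cast_lt.2 hkn
    linarith
  set W₁ : Submodule ℝ (EuclideanSpace ℝ (Fin n)) := Submodule.span ℝ (U '' ↑S) with hW₁def
  set W₂ : Submodule ℝ (EuclideanSpace ℝ (Fin n)) := Submodule.span ℝ (U '' ↑Sᶜ) with hW₂def
  have hU₁ : ∀ i ∈ S, U i ∈ W₁ := fun i hi =>
    Submodule.subset_span ⟨i, by simpa using hi, rfl⟩
  have hU₂ : ∀ i, i ∉ S → U i ∈ W₂ := fun i hi =>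
    Submodule.subset_span ⟨i, by simpa using hi, rfl⟩
  have htop : W₁ ⊔ W₂ = ⊤ := by
    rw [eq_top_iff]
    intro x _
    obtain ⟨c, -, rfl⟩ := hpos x
    apply Submodule.sum_mem
    intro i _
    apply Submodule.smul_mem
    by_cases hi : i ∈ S
    · exact Submodule.mem_sup_left (hU₁ i hi)
    · exact Submodule.mem_sup_right (hU₂ i hi)
  have hcompl : IsCompl W₁ W₂ := ⟨disjoint_iff.2 hsep, codisjoint_iff.2 htop⟩
  have hrank1 : finrank ℝ W₁ = k := hk.symm
  have hrank2 : finrank ℝ W₂ = n - k := by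
    have h := Submodule.finrank_sup_add_finrank_inf_eq W₁ W₂
    rw [htop, hsep, finrank_top, finrank_bot, finrank_euclideanSpace_fin, add_zero, hrank1] at h
    omega
  have hUne : ∀ i, U i ≠ 0 := by
    intro i h
    have := hunit i
    rw [h] at this
    simp at this
  -- main part
  have hmain : ∀ lam : ℝ, 0 < lam →
      (fun i => if i ∈ S then lam * b i else lam ^ (-(k : ℝ) / ((n : ℝ) - k)) * b i) ∈
        solSet U γ := by
    intro lam hlam
    set a₂ : ℝ := lam ^ (-(k : ℝ) / ((n : ℝ) - k)) with ha₂def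
    have ha₂pos : 0 < a₂ := Real.rpow_pos_of_pos hlam _
    set w : Fin m → ℝ := fun i => if i ∈ S then lam else a₂ with hwdef
    have hwpos : ∀ i, 0 < w i := by
      intro i
      by_cases hi : i ∈ S <;> simp [hwdef, hi, hlam, ha₂pos]
    have hb' : (fun i => if i ∈ S then lam * b i else lam ^ (-(k : ℝ) / ((n : ℝ) - k)) * b i)
        = fun i => w i * b i := by
      funext i
      by_cases hi : i ∈ S <;> simp [hwdef, hi, ha₂def]
    rw [hb']
    -- product identity
    have hprod : lam ^ k * a₂ ^ (n - k) = 1 := by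
      have hcast : ((n - k : ℕ) : ℝ) = (n:ℝ) - (k:ℝ) := by
        rw [Nat.cast_sub hkn.le]
      have h1 : a₂ ^ (n - k) = lam ^ (-(k:ℝ)) := by
        rw [ha₂def, ← Real.rpow_natCast (lam ^ (-(k:ℝ)/((n:ℝ)-(k:ℝ)))) (n - k),
          ← Real.rpow_mul hlam.le, hcast]
        congr 1
        field_simp
      have h2 : lam ^ k = lam ^ ((k:ℕ):ℝ) := (Real.rpow_natCast lam k).symm
      rw [h1, h2, ← Real.rpow_add hlam]
      simp
    -- the scaling map
    obtain ⟨T, hT₁, hT₂, hTsurj⟩ :=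
      scaling_exists W₁ W₂ hcompl lam a₂ (ne_of_gt hlam) (ne_of_gt ha₂pos)
    have hOC : IsCompl W₂ᗮ W₁ᗮ := isCompl_orth hcompl
    have hEig : ∀ i x, ⟪U i, T x⟫ = w i * ⟪U i, x⟫ := by
      intro i x
      obtain ⟨u, v, huv, -⟩ := Submodule.existsUnique_add_of_isCompl hOC x
      have hTx : T x = lam • (u : EuclideanSpace ℝ (Fin n)) + a₂ • (v : EuclideanSpace ℝ (Fin n)) := by
        rw [← huv, map_add, hT₁ u u.2, hT₂ v v.2]
      by_cases hi : i ∈ S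
      · have hw : U i ∈ W₁ := hU₁ i hi
        have h0 : ⟪U i, (v : EuclideanSpace ℝ (Fin n))⟫ = 0 :=
          (Submodule.mem_orthogonal W₁ (v : EuclideanSpace ℝ (Fin n))).1 v.2 (U i) hw
        rw [hTx, ← huv]
        rw [inner_add_right, inner_add_right, real_inner_smul_right, real_inner_smul_right, h0]
        simp [hwdef, hi]
      · have hw : U i ∈ W₂ := hU₂ i hi
        have h0 : ⟪U i, (u : EuclideanSpace ℝ (Fin n))⟫ = 0 :=
          (Submodule.mem_orthogonal W₂ (u : EuclideanSpace ℝ (Fin n))).1 u.2 (U i) hw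
        rw [hTx, ← huv]
        rw [inner_add_right, inner_add_right, real_inner_smul_right, real_inner_smul_right, h0]
        simp [hwdef, hi]
    have hTK : ∀ i, ∀ x ∈ (Submodule.span ℝ {U i})ᗮ, T x ∈ (Submodule.span ℝ {U i})ᗮ := by
      intro i x hx
      rw [Submodule.mem_orthogonal_singleton_iff_inner_left] at hx ⊢
      rw [real_inner_comm] at hx ⊢
      rw [hEig i x, hx, mul_zero]
    -- determinant of the restriction
    have hdet : ∀ i, |LinearMap.det (T.restrict (hTK i))| = (w i)⁻¹ := by
      intro i
      by_cases hi : i ∈ S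
      · rw [det_restrict_hyperplane hcompl T hT₁ hT₂ (hUne i) (hU₁ i hi) (hTK i),
          hrank1, hrank2]
        have hpos' : 0 < lam ^ (k-1) * a₂ ^ (n-k) := by positivity
        rw [abs_of_pos hpos']
        have hmul : lam * (lam ^ (k-1) * a₂ ^ (n-k)) = 1 := by
          rw [← mul_assoc, ← pow_succ']
          have : k - 1 + 1 = k := by omega
          rw [this, hprod]
        have hwi : w i = lam := by simp [hwdef, hi]
        rw [hwi]
        field_simp
        linarith [hmul]
      · rw [det_restrict_hyperplane hcompl.symm T hT₂ hT₁ (hUne i) (hU₂ i hi) (hTK i),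
          hrank1, hrank2]
        have hpos' : 0 < a₂ ^ (n-k-1) * lam ^ k := by positivity
        rw [abs_of_pos hpos']
        have hmul : a₂ * (a₂ ^ (n-k-1) * lam ^ k) = 1 := by
          rw [← mul_assoc, ← pow_succ']
          have : n - k - 1 + 1 = n - k := by omega
          rw [this, mul_comm, hprod]
        have hwi : w i = a₂ := by simp [hwdef, hi]
        rw [hwi]
        field_simp
        linarith [hmul]
    -- polyhedron and facet images
    have hpoly : polyhedron U (fun i => w i * b i) = T '' polyhedron U b := by
      ext y
      constructor
      · intro hy
        obtain ⟨x, rfl⟩ := hTsurj y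
        refine ⟨x, fun i => ?_, rfl⟩
        have := hy i
        rw [hEig i x] at this
        exact le_of_mul_le_mul_left this (hwpos i)
      · rintro ⟨x, hx, rfl⟩
        intro i
        rw [hEig i x]
        exact mul_le_mul_of_nonneg_left (hx i) (hwpos i).le
    have hfacet : ∀ i, polyhedron U (fun j => w j * b j) ∩ {x | ⟪U i, x⟫ = w i * b i}
        = T '' (polyhedron U b ∩ {x | ⟪U i, x⟫ = b i}) := by
      intro i
      rw [hpoly]
      ext y
      constructor
      · rintro ⟨⟨x, hx, rfl⟩, hy2⟩
        refine ⟨x, ⟨hx, ?_⟩, rfl⟩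
        have : ⟪U i, T x⟫ = w i * b i := hy2
        rw [hEig i x] at this
        exact mul_left_cancel₀ (ne_of_gt (hwpos i)) this
      · rintro ⟨x, ⟨hx1, hx2⟩, rfl⟩
        refine ⟨⟨x, hx1, rfl⟩, ?_⟩
        show ⟪U i, T x⟫ = w i * b i
        rw [hEig i x, hx2]
    -- measure of facets
    have hn' : 1 ≤ n := hn
    have hμ : ∀ i, μH[(n:ℝ)-1] (T '' (polyhedron U b ∩ {x | ⟪U i, x⟫ = b i}))
        = ENNReal.ofReal ((w i)⁻¹) * μH[(n:ℝ)-1] (polyhedron U b ∩ {x | ⟪U i, x⟫ = b i}) := by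
      intro i
      rw [hplane_image hn' T (hunit i) (hTK i) (b i) _ (fun x hx => hx.2), hdet i]
    -- conclude membership
    refine ⟨fun i => mul_nonneg (hwpos i).le (hb i), ?_⟩
    rw [← hγ]
    funext i
    show (fun j => w j * b j) i / n
        * (μH[(n:ℝ)-1] (polyhedron U (fun j => w j * b j)
            ∩ {x | ⟪U i, x⟫ = (fun j => w j * b j) i})).toReal
      = coneVol U b i
    simp only []
    rw [hfacet i, hμ i, ENNReal.toReal_mul,
      ENNReal.toReal_ofReal (inv_nonneg.2 (hwpos i).le)]
    show w i * b i / n * ((w i)⁻¹ * _) = coneVol U b i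
    rw [coneVol]
    field_simp
    rw [mul_comm, mul_div_assoc, mul_div_cancel_left₀ _ (hwpos i).ne', mul_comm]
  -- infinitude
  refine ⟨hmain, ?_⟩
  have hSne : S.Nonempty := by
    rw [Finset.nonempty_iff_ne_empty]
    intro h
    have hbot : W₁ = ⊥ := by
      rw [hW₁def, h]
      simp
    rw [hbot, finrank_bot] at hk
    omega
  obtain ⟨i₀, hi₀⟩ := hSne
  have hbpos : 0 < b i₀ := by
    have hγ0 := hγpos i₀
    rw [← hγ] at hγ0
    rw [coneVol] at hγ0
    set t := (μH[(n:ℝ)-1] (polyhedron U b ∩ {x | ⟪U i₀, x⟫ = b i₀})).toReal with htdef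
    have ht : 0 ≤ t := ENNReal.toReal_nonneg
    by_contra h
    push_neg at h
    have h1 : b i₀ / n ≤ 0 := div_nonpos_iff.2 (Or.inr ⟨h, Nat.cast_nonneg n⟩)
    nlinarith
  have hInjOn : Set.InjOn
      (fun lam : ℝ => (fun i => if i ∈ S then lam * b i
        else lam ^ (-(k : ℝ) / ((n : ℝ) - k)) * b i)) (Set.Ioi 0) := by
    intro x _ y _ hxy
    have := congrFun hxy i₀
    simp only [hi₀, if_pos] at this
    exact mul_right_cancel₀ (ne_of_gt hbpos) this
  have himg : ((fun lam : ℝ => (fun i => if i ∈ S then lam * b i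
      else lam ^ (-(k : ℝ) / ((n : ℝ) - k)) * b i)) '' Set.Ioi 0) ⊆ solSet U γ := by
    rintro - ⟨lam, hlam, rfl⟩
    exact hmain lam hlam
  exact Set.Infinite.mono himg (Set.Infinite.image hInjOn (Set.Ioi_infinite 0))
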